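/- Let b > 0 and g > 1 with bg < 1, and set a = b(g−1)/(1−bg) > 0. Let ψ:ℝ→ℝ be the logistic function ψ(t) = e^t/(e^t+1), with derivative ψ'(t) = e^t/(e^t+1)². Then for every z ∈ [0,1), the MBBEFD density satisfies f_{b,g}(z) = (g−1)(b−1)log(b) b^{1−z} / ((g−1)b^{1−z} + (1−bg))² = (a+1) log(1/b) · ψ'( z log(1/b) + log(a) ). -/

import Mathlib

/-- The MBBEFD density on `[0,1)` for parameters `g > 1`, `b > 0`, `b ≠ 1`, `bg ≠ 1`. -/
noncomputable def mbbefdDensity (b g : ℝ) : ℝ → ℝ := fun z =>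
  (g - 1) * (b - 1) * Real.log b * b ^ (1 - z) /
    ((g - 1) * b ^ (1 - z) + (1 - b * g)) ^ 2

/-- The derivative `ψ'` of the logistic function `ψ(t) = eᵗ/(eᵗ+1)`. -/
noncomputable def logisticDeriv (t : ℝ) : ℝ := Real.exp t / (Real.exp t + 1) ^ 2

/-- For `b > 0`, `g > 1` with `bg < 1`, setting `a = b(g-1)/(1-bg) > 0`,
the logistic function `ψ(t) = eᵗ/(eᵗ+1)` has derivative `ψ'(t) = eᵗ/(eᵗ+1)²`, and for
every `z ∈ [0,1)` the MBBEFD density satisfies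
`f_{b,g}(z) = (a+1) log(1/b) ψ'(z log(1/b) + log a)`. -/
theorem statement8 (b g : ℝ) (hb : 0 < b) (hg : 1 < g) (hbg : b * g < 1) :
    0 < b * (g - 1) / (1 - b * g) ∧
    (∀ t : ℝ, HasDerivAt (fun t => Real.exp t / (Real.exp t + 1)) (logisticDeriv t) t) ∧
    (∀ z ∈ Set.Ico (0:ℝ) 1,
      mbbefdDensity b g z
        = (b * (g - 1) / (1 - b * g) + 1) * Real.log (1 / b) *
          logisticDeriv (z * Real.log (1 / b) + Real.log (b * (g - 1) / (1 - b * g)))) := by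
  have hden : 0 < 1 - b * g := by linarith
  have ha : 0 < b * (g - 1) / (1 - b * g) :=
    div_pos (mul_pos hb (by linarith)) hden
  refine ⟨ha, ?_, ?_⟩
  · intro t
    have h1 := Real.hasDerivAt_exp t
    have h2 : HasDerivAt (fun t => Real.exp t + 1) (Real.exp t) t := h1.add_const 1
    have hne : Real.exp t + 1 ≠ 0 := by positivity
    have := h1.div h2 hne
    refine this.congr_deriv ?_
    unfold logisticDeriv
    field_simp
    ring
  · intro z hz
    set a := b * (g - 1) / (1 - b * g) with hadef
    set u := Real.exp (-(z * Real.log b)) with hudef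
    have hu : 0 < u := Real.exp_pos _
    have hbz : b ^ (1 - z) = b * u := by
      rw [Real.rpow_def_of_pos hb,
        show Real.log b * (1 - z) = Real.log b + -(z * Real.log b) by ring,
        Real.exp_add, Real.exp_log hb]
    have hlog : Real.log (1 / b) = -Real.log b := by rw [one_div, Real.log_inv]
    have hexp : Real.exp (z * Real.log (1 / b) + Real.log a) = u * a := by
      rw [Real.exp_add, Real.exp_log ha, hlog, hudef]
      ring_nf
    have hden' : (1 : ℝ) - b * g ≠ 0 := ne_of_gt hden
    have hD1 : (g - 1) * (b * u) + (1 - b * g) ≠ 0 := by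
      have : 0 < (g - 1) * (b * u) := mul_pos (by linarith) (mul_pos hb hu)
      linarith
    have h1 : u * a + 1 = ((g - 1) * (b * u) + (1 - b * g)) / (1 - b * g) := by
      rw [hadef]; field_simp
    have h2 : a + 1 = (1 - b) / (1 - b * g) := by
      rw [hadef]; field_simp; ring
    have h3 : u * a = u * b * (g - 1) / (1 - b * g) := by
      rw [hadef]; ring
    unfold mbbefdDensity logisticDeriv
    rw [hbz, hexp, hlog, h2, h1, h3]
    set D := (g - 1) * (b * u) + (1 - b * g) with hDdef
    field_simp
    rw [mul_div_cancel_right₀ _ (show (1:ℝ) - g * b ≠ 0 by linarith)]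
    ring
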